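/- arXiv:2012.02396 — 2 statements merged into one kernel-verified Lean document; each statement's English description precedes it below -/
import Mathlib

section
/- Every meager-additive subset of the Cantor group ℕ → ZMod 2 has strong measure zero (with respect to the standard metric on the Cantor space). -/
open Pointwise

-- The standard metric on the Cantor group `ℕ → ZMod 2`:
-- `dist x y = (1/2)^n` where `n` is the least index at which `x` and `y` differ.
attribute [local instance] PiNat.metricSpace

/-- A subset `X` of a topological additive group `Y` is meager-additive if
`X + M` is meager for every meager set `M ⊆ Y`. -/
def IsMeagerAdditive {Y : Type*} [TopologicalSpace Y] [AddGroup Y] (X : Set Y) : Prop :=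
  ∀ M : Set Y, IsMeagre M → IsMeagre (X + M)

/-- A subset `X` of a metric space `Y` has strong measure zero if for every sequence
`(ε n)` of positive reals there is a sequence `(U n)` of subsets of `Y` with
`diam (U n) ≤ ε n` for every `n` whose union covers `X`. -/
def HasStrongMeasureZero {Y : Type*} [MetricSpace Y] (X : Set Y) : Prop :=
  ∀ ε : ℕ → ℝ, (∀ n, 0 < ε n) →
    ∃ U : ℕ → Set Y, (∀ n, EMetric.diam (U n) ≤ ENNReal.ofReal (ε n)) ∧ X ⊆ ⋃ n, U n

/-- The code of the length-`L` prefix of `x` as a natural number below `2^L`. -/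
def cantorCode (x : ℕ → ZMod 2) (L : ℕ) : ℕ :=
  ∑ i ∈ Finset.range L, (x i).val * 2 ^ i

lemma cantorCode_lt (x : ℕ → ZMod 2) (L : ℕ) : cantorCode x L < 2 ^ L := by
  induction L with
  | zero => simp [cantorCode]
  | succ L ih =>
    have h1 : (x L).val < 2 := ZMod.val_lt (x L)
    have : cantorCode x (L + 1) = cantorCode x L + (x L).val * 2 ^ L := by
      simp [cantorCode, Finset.sum_range_succ]
    rw [this, pow_succ]
    have : (x L).val * 2 ^ L ≤ 1 * 2 ^ L := by
      exact Nat.mul_le_mul_right _ (by omega)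
    omega

lemma cantorCode_inj (x x' : ℕ → ZMod 2) (L : ℕ) (h : cantorCode x L = cantorCode x' L) :
    ∀ i < L, x i = x' i := by
  induction L with
  | zero => omega
  | succ L ih =>
    have e1 : cantorCode x (L + 1) = cantorCode x L + (x L).val * 2 ^ L := by
      simp [cantorCode, Finset.sum_range_succ]
    have e2 : cantorCode x' (L + 1) = cantorCode x' L + (x' L).val * 2 ^ L := by
      simp [cantorCode, Finset.sum_range_succ]
    have b1 := cantorCode_lt x L
    have b2 := cantorCode_lt x' L
    have hv1 : (x L).val < 2 := ZMod.val_lt (x L)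
    have hv2 : (x' L).val < 2 := ZMod.val_lt (x' L)
    rw [e1, e2] at h
    have hval : (x L).val = (x' L).val := by
      have h1 : (x L).val = 0 ∨ (x L).val = 1 := by omega
      have h2 : (x' L).val = 0 ∨ (x' L).val = 1 := by omega
      have hp : 0 < 2 ^ L := Nat.pow_pos (by norm_num)
      rcases h1 with h1 | h1 <;> rcases h2 with h2 | h2 <;> rw [h1, h2] at h <;> omega
    have hL : x L = x' L := ZMod.val_injective 2 hval
    have hc : cantorCode x L = cantorCode x' L := by
      rw [hval] at h; omega
    intro i hi
    rcases Nat.lt_succ_iff_lt_or_eq.1 hi with hi' | rfl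
    · exact ih hc i hi'
    · exact hL

lemma zmod2_add_add : ∀ a b : ZMod 2, a + (a + b) = b := by decide

lemma zmod2_eq_of_add_eq_zero : ∀ a b : ZMod 2, a + b = 0 → a = b := by decide

/-- Every meager-additive subset of the Cantor group `ℕ → ZMod 2` has strong measure
zero with respect to the standard metric on the Cantor space. -/
theorem hasStrongMeasureZero_of_isMeagerAdditive_cantorGroup (X : Set (ℕ → ZMod 2))
    (hX : IsMeagerAdditive X) : HasStrongMeasureZero X := by
  intro ε hε
  classical
  -- Step 1: the fast-growing sequence of lengths
  have key : ∀ a : ℕ, ∃ N, a < N ∧ ∀ b < 2 ^ a, ((1 : ℝ) / 2) ^ N ≤ ε (Nat.pair a b) := by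
    intro a
    have hne : (Finset.range (2 ^ a)).Nonempty := ⟨0, by simp [Nat.pow_pos]⟩
    set δ := (Finset.range (2 ^ a)).inf' hne (fun b => ε (Nat.pair a b)) with hδ
    have hδpos : 0 < δ := by
      rw [hδ, Finset.lt_inf'_iff]
      intro b _; exact hε _
    obtain ⟨N0, hN0⟩ : ∃ N0 : ℕ, ((1 : ℝ) / 2) ^ N0 < δ :=
      exists_pow_lt_of_lt_one hδpos (by norm_num)
    refine ⟨max N0 (a + 1), lt_of_lt_of_le (Nat.lt_succ_self a) (le_max_right _ _), ?_⟩
    intro b hb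
    have h1 : ((1 : ℝ) / 2) ^ max N0 (a + 1) ≤ ((1 : ℝ) / 2) ^ N0 :=
      pow_le_pow_of_le_one (by norm_num) (by norm_num) (le_max_left _ _)
    have h2 : δ ≤ ε (Nat.pair a b) :=
      Finset.inf'_le _ (Finset.mem_range.2 hb)
    linarith
  choose f hf1 hf2 using key
  -- the sequence n
  set n : ℕ → ℕ := fun k => Nat.rec 0 (fun _ m => f m) k with hn
  have hstep : ∀ k, n (k + 1) = f (n k) := fun k => rfl
  have hmono : StrictMono n := strictMono_nat_of_lt_succ (fun k => by
    rw [hstep]; exact hf1 (n k))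
  -- Step 2: the meager set M
  set M : Set (ℕ → ZMod 2) :=
    {z | ∀ k, ∃ i, (n k ≤ i ∧ i < n (k + 1)) ∧ z i ≠ 0} with hM
  have hopen : IsOpen Mᶜ := by
    have : Mᶜ = ⋃ k, ⋂ i ∈ Finset.Ico (n k) (n (k + 1)),
        {z : ℕ → ZMod 2 | z i = 0} := by
      ext z
      simp only [hM, Set.mem_compl_iff, Set.mem_setOf_eq, not_forall, Set.mem_iUnion,
        Set.mem_iInter, Finset.mem_Ico]
      constructor
      · rintro ⟨k, hk⟩
        refine ⟨k, fun i hi => ?_⟩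
        by_contra h
        exact hk ⟨i, hi, h⟩
      · rintro ⟨k, hk⟩
        refine ⟨k, ?_⟩
        rintro ⟨i, hi, hne⟩
        exact hne (hk i hi)
    rw [this]
    refine isOpen_iUnion fun k => isOpen_biInter_finset fun i _ => ?_
    exact (continuous_apply i).isOpen_preimage {0} (isOpen_discrete _)
  have hdense : Dense Mᶜ := by
    rw [Metric.dense_iff]
    intro x r hr
    obtain ⟨k, hk⟩ : ∃ k : ℕ, ((1 : ℝ) / 2) ^ k < r :=
      exists_pow_lt_of_lt_one hr (by norm_num)
    set z : ℕ → ZMod 2 := fun i => if n k ≤ i ∧ i < n (k + 1) then 0 else x i with hz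
    refine ⟨z, ?_, ?_⟩
    · rw [Metric.mem_ball]
      have hcyl : z ∈ PiNat.cylinder x (n k) := by
        intro i hi
        simp only [hz]
        rw [if_neg]
        rintro ⟨h1, -⟩; omega
      have := PiNat.mem_cylinder_iff_dist_le.1 hcyl
      calc dist z x ≤ ((1 : ℝ) / 2) ^ n k := this
        _ ≤ ((1 : ℝ) / 2) ^ k :=
            pow_le_pow_of_le_one (by norm_num) (by norm_num) (hmono.le_apply)
        _ < r := hk
    · intro hmem
      obtain ⟨i, hi, hne⟩ := hmem k
      exact hne (by simp only [hz]; rw [if_pos hi])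
  have hmeagre : IsMeagre M := residual_of_dense_open hopen hdense
  -- Step 3: a point outside X + M
  have hXM : IsMeagre (X + M) := hX M hmeagre
  haveI : CompleteSpace (ℕ → ZMod 2) := PiNat.completeSpace
  have hdc : Dense ((X + M)ᶜ) := dense_of_mem_residual hXM
  obtain ⟨y, hy⟩ : ∃ y, y ∉ X + M := by
    obtain ⟨y, hy⟩ := hdc.nonempty
    exact ⟨y, hy⟩
  -- Step 4: every x ∈ X agrees with y on some block
  have hagree : ∀ x ∈ X, ∃ k, ∀ i, n k ≤ i → i < n (k + 1) → x i = y i := by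
    intro x hx
    have hxy : x + y ∉ M := by
      intro h
      apply hy
      refine ⟨x, hx, x + y, h, ?_⟩
      funext i
      exact zmod2_add_add (x i) (y i)
    simp only [hM, Set.mem_setOf_eq, not_forall] at hxy
    obtain ⟨k, hk⟩ := hxy
    refine ⟨k, fun i h1 h2 => ?_⟩
    by_contra hne
    apply hk
    refine ⟨i, ⟨h1, h2⟩, ?_⟩
    intro h0
    exact hne (zmod2_eq_of_add_eq_zero _ _ h0)
  -- Step 5: the cover
  set U : ℕ → Set (ℕ → ZMod 2) := fun m =>
    {x | ∃ k, m = Nat.pair (n k) (cantorCode x (n k)) ∧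
      ∀ i, n k ≤ i → i < n (k + 1) → x i = y i} with hU
  refine ⟨U, ?_, ?_⟩
  · intro m
    refine EMetric.diam_le ?_
    rintro x ⟨k, hm, hmatch⟩ x' ⟨k', hm', hmatch'⟩
    have hpair : n k = n k' ∧ cantorCode x (n k) = cantorCode x' (n k') :=
      Nat.pair_eq_pair.1 (hm ▸ hm')
    have hkk : k = k' := hmono.injective hpair.1
    subst hkk
    have hpre : ∀ i < n k, x i = x' i := cantorCode_inj x x' (n k) hpair.2
    have hcyl : x' ∈ PiNat.cylinder x (n (k + 1)) := by
      intro i hi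
      rcases lt_or_ge i (n k) with h | h
      · exact (hpre i h).symm
      · rw [hmatch i h hi, hmatch' i h hi]
    have hd : dist x' x ≤ ((1 : ℝ) / 2) ^ n (k + 1) :=
      PiNat.mem_cylinder_iff_dist_le.1 hcyl
    have hεm : ((1 : ℝ) / 2) ^ n (k + 1) ≤ ε m := by
      rw [hm, hstep]
      exact hf2 (n k) _ (cantorCode_lt x (n k))
    rw [edist_dist, dist_comm]
    exact ENNReal.ofReal_le_ofReal (le_trans hd hεm)
  · intro x hx
    obtain ⟨k, hk⟩ := hagree x hx
    refine Set.mem_iUnion.2 ⟨Nat.pair (n k) (cantorCode x (n k)), k, rfl, hk⟩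
end

section
/- Let C be the Cantor space ℕ → Bool with its standard metric, and let π : ℕ → ℕ be a partition of ℕ into finite sets (i.e., every fiber π⁻¹{n} is finite). Then every π-supernull subset of C has sharp measure zero. -/
-- The Cantor space `ℕ → Bool` carries the metric `dist x y = (1/2)^n`, where `n` is the
-- least index at which `x` and `y` differ; it induces the product topology.
attribute [local instance] PiNat.metricSpace

/-- An ω-cover of a topological space `Y` is a family `A` of open subsets of `Y`
such that `Y` itself is not an element of `A` and every finite subset of `Y` is
contained in a single element of `A`. -/
def IsOmegaCover {Y : Type*} [TopologicalSpace Y] (A : Set (Set Y)) : Prop :=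
  (∀ U ∈ A, IsOpen U) ∧ Set.univ ∉ A ∧
    ∀ F : Set Y, F.Finite → ∃ U ∈ A, F ⊆ U

/-- Given a partition `π : ℕ → ℕ` into finite sets, a subset `X` of a topological
space `Y` is `π`-supernull if for every sequence `(A n)` of ω-covers of `Y` there is
an infinite collection of open sets `{U n}` with `U n ∈ A n` for every `n`, such that
every element of `X` belongs to `⋃ {U k : π k = n}` for all but finitely many `n`. -/
def IsPiSupernull {Y : Type*} [TopologicalSpace Y] (π : ℕ → ℕ) (X : Set Y) : Prop :=
  ∀ A : ℕ → Set (Set Y), (∀ n, IsOmegaCover (A n)) →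
    ∃ U : ℕ → Set Y, (∀ n, U n ∈ A n) ∧ (Set.range U).Infinite ∧
      ∀ x ∈ X, ∀ᶠ n in Filter.atTop, x ∈ ⋃ k ∈ π ⁻¹' {n}, U k

/-- A subset `X` of a metric space `Y` has sharp measure zero if for every sequence
`(ε n)` of positive reals there are a sequence `(U n)` of subsets of `Y` with
`diam (U n) ≤ ε n` for every `n` whose union covers `X`, together with a map
`ρ : ℕ → ℕ` with finite fibers such that every `x ∈ X` belongs to
`⋃ {U k : ρ k = m}` for all but finitely many `m`. -/
def HasSharpMeasureZero {Y : Type*} [MetricSpace Y] (X : Set Y) : Prop :=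
  ∀ ε : ℕ → ℝ, (∀ n, 0 < ε n) →
    ∃ (U : ℕ → Set Y) (ρ : ℕ → ℕ),
      (∀ n, EMetric.diam (U n) ≤ ENNReal.ofReal (ε n)) ∧ X ⊆ ⋃ n, U n ∧
      (∀ m, (ρ ⁻¹' {m}).Finite) ∧
      ∀ x ∈ X, ∀ᶠ m in Filter.atTop, x ∈ ⋃ k ∈ ρ ⁻¹' {m}, U k

/-- Every `π`-supernull subset of the Cantor space has sharp measure zero. -/
theorem hasSharpMeasureZero_of_piSupernull (π : ℕ → ℕ) (hπ : ∀ n, (π ⁻¹' {n}).Finite)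
    (X : Set (ℕ → Bool)) (hX : IsPiSupernull π X) :
    HasSharpMeasureZero X := by
  classical
  intro ε hε
  -- choose cylinder lengths
  have hexist : ∀ j : ℕ, ∃ N : ℕ, (1 / 2 : ℝ) ^ N ≤ ε j := by
    intro j
    obtain ⟨N, hN⟩ := exists_pow_lt_of_lt_one (hε j) (by norm_num : (1 / 2 : ℝ) < 1)
    exact ⟨N, hN.le⟩
  choose N hN using hexist
  set ℓ : ℕ → ℕ := fun j => j + 1 + N j with hℓdef
  have hℓε : ∀ j, (1 / 2 : ℝ) ^ (ℓ j) ≤ ε j := by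
    intro j
    refine le_trans ?_ (hN j)
    exact pow_le_pow_of_le_one (by norm_num) (by norm_num) (by simp only [hℓdef]; omega)
  have hℓgt : ∀ j, j < ℓ j := fun j => by simp [hℓdef]; omega
  -- the ω-covers
  set A : ℕ → Set (Set (ℕ → Bool)) := fun n =>
    { U | ∃ (r : ℕ) (s : ℕ → (ℕ → Bool)),
        U = ⋃ i ∈ Finset.range (r + 1), PiNat.cylinder (s i) (ℓ (Nat.pair n i)) } with hAdef
  have hA : ∀ n, IsOmegaCover (A n) := by
    intro n
    refine ⟨?_, ?_, ?_⟩
    · rintro U ⟨r, s, rfl⟩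
      exact isOpen_biUnion fun i _ => by exact PiNat.isOpen_cylinder (E := fun _ => Bool) (s i) (ℓ (Nat.pair n i))
    · rintro ⟨r, s, hUniv⟩
      -- build a point missed by the union
      set y : ℕ → Bool := fun t =>
        if h : ∃ i, i ≤ r ∧ Nat.pair n i = t then !(s h.choose t) else false with hydef
      have : y ∈ (Set.univ : Set (ℕ → Bool)) := Set.mem_univ y
      rw [hUniv] at this
      simp only [Set.mem_iUnion, Finset.mem_range] at this
      obtain ⟨i, hi, hyc⟩ := this
      have hmem := PiNat.mem_cylinder_iff.1 hyc (Nat.pair n i) (hℓgt _)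
      have hex : ∃ i', i' ≤ r ∧ Nat.pair n i' = Nat.pair n i := ⟨i, by omega, rfl⟩
      have hchoose : hex.choose = i := (Nat.pair_eq_pair.1 hex.choose_spec.2).2
      have : y (Nat.pair n i) = !(s i (Nat.pair n i)) := by
        rw [hydef]
        simp only [dif_pos hex]
        rw [hchoose]
      rw [this] at hmem
      exact (Bool.not_ne_self _) hmem
    · intro F hF
      set L := hF.toFinset.toList with hLdef
      refine ⟨⋃ i ∈ Finset.range (L.length + 1),
        PiNat.cylinder (L.getD i (fun _ => false)) (ℓ (Nat.pair n i)),
        ⟨L.length, fun i => L.getD i (fun _ => false), rfl⟩, ?_⟩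
      intro x hx
      have hxL : x ∈ L := by
        rw [hLdef]
        simpa using hx
      obtain ⟨i, hi, hxi⟩ := List.mem_iff_getElem.1 hxL
      simp only [Set.mem_iUnion, Finset.mem_range]
      refine ⟨i, by omega, ?_⟩
      have : L.getD i (fun _ => false) = x := by
        rw [List.getD_eq_getElem L _ hi, hxi]
      rw [this]
      exact PiNat.self_mem_cylinder _ _
  -- apply supernullity
  obtain ⟨U, hUA, -, hUx⟩ := hX A hA
  choose r s hs using hUA
  -- the final cover and index map
  set V : ℕ → Set (ℕ → Bool) := fun j =>
    if j.unpair.2 ≤ r j.unpair.1 then PiNat.cylinder (s j.unpair.1 j.unpair.2) (ℓ j)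
    else ∅ with hVdef
  set ρ : ℕ → ℕ := fun j =>
    if j.unpair.2 ≤ r j.unpair.1 then π j.unpair.1 else j with hρdef
  have hVpair : ∀ k i, i ≤ r k →
      V (Nat.pair k i) = PiNat.cylinder (s k i) (ℓ (Nat.pair k i)) := by
    intro k i hi
    rw [hVdef]
    simp [Nat.unpair_pair, hi]
  have hρpair : ∀ k i, i ≤ r k → ρ (Nat.pair k i) = π k := by
    intro k i hi
    rw [hρdef]
    simp [Nat.unpair_pair, hi]
  -- eventual covering property
  have hev : ∀ x ∈ X, ∀ᶠ m in Filter.atTop, x ∈ ⋃ k ∈ ρ ⁻¹' {m}, V k := by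
    intro x hx
    refine (hUx x hx).mono fun m hm => ?_
    simp only [Set.mem_iUnion, Set.mem_preimage, Set.mem_singleton_iff] at hm ⊢
    obtain ⟨k, hk, hxU⟩ := hm
    rw [hs k] at hxU
    simp only [Set.mem_iUnion, Finset.mem_range] at hxU
    obtain ⟨i, hi, hxc⟩ := hxU
    have hir : i ≤ r k := by omega
    exact ⟨Nat.pair k i, by rw [hρpair k i hir, hk], by rw [hVpair k i hir]; exact hxc⟩
  refine ⟨V, ρ, ?_, ?_, ?_, hev⟩
  · -- diameters
    intro j
    rw [hVdef]
    by_cases h : j.unpair.2 ≤ r j.unpair.1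
    · simp only [if_pos h]
      refine EMetric.diam_le fun x hx y hy => ?_
      have hxy : x ∈ PiNat.cylinder y (ℓ j) := by
        rw [PiNat.mem_cylinder_iff] at hx hy ⊢
        intro t ht
        rw [hx t ht, hy t ht]
      have hd : dist x y ≤ (1 / 2 : ℝ) ^ (ℓ j) := PiNat.mem_cylinder_iff_dist_le.1 hxy
      rw [edist_dist]
      exact ENNReal.ofReal_le_ofReal (hd.trans (hℓε j))
    · simp only [if_neg h]
      exact EMetric.diam_empty.le.trans zero_le
  · -- covering
    intro x hx
    obtain ⟨m, hm⟩ := (hev x hx).exists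
    simp only [Set.mem_iUnion] at hm ⊢
    obtain ⟨k, _, hk⟩ := hm
    exact ⟨k, hk⟩
  · -- finite fibers
    intro m
    have hsub : ρ ⁻¹' {m} ⊆
        insert m (⋃ k ∈ π ⁻¹' {m}, (fun i => Nat.pair k i) '' Set.Iic (r k)) := by
      intro j hj
      simp only [Set.mem_preimage, Set.mem_singleton_iff, hρdef] at hj
      by_cases h : j.unpair.2 ≤ r j.unpair.1
      · rw [if_pos h] at hj
        refine Set.mem_insert_iff.2 (Or.inr ?_)
        simp only [Set.mem_iUnion, Set.mem_preimage, Set.mem_singleton_iff]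
        exact ⟨j.unpair.1, hj, ⟨j.unpair.2, h, Nat.pair_unpair j⟩⟩
      · rw [if_neg h] at hj
        exact Set.mem_insert_iff.2 (Or.inl hj)
    refine Set.Finite.subset ?_ hsub
    exact Set.Finite.insert m
      (Set.Finite.biUnion (hπ m) fun k _ => (Set.finite_Iic (r k)).image _)
end
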